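/- For every ε ∈ (0,1/32), every process on I_ε with Σ_{i ∈ I_ε} p_i^1 = 1, and every step t, one has W_{t+B_ε} ≤ max( e^{−1/(81·B_ε)} · W_t , 64 · ε · B_ε³ ). -/

import Mathlib

/-- `B_ε := 2⌈log₂(1/ε)⌉ + 1`. -/
noncomputable def Bval (ε : ℝ) : ℤ := 2 * ⌈Real.logb 2 (1 / ε)⌉ + 1

/-- `I_ε`: the odd integers `i` with `-B_ε ≤ i ≤ B_ε`. -/
noncomputable def Iset (ε : ℝ) : Finset ℤ :=
  (Finset.Icc (-(Bval ε)) (Bval ε)).filter (fun i => Odd i)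

/-- `I_ε⁺ := I_ε ∩ {i > 0}`. -/
noncomputable def Ipos (ε : ℝ) : Finset ℤ := (Iset ε).filter (fun i => 0 < i)

/-- `I_ε⁻ := I_ε ∩ {i < 0}`. -/
noncomputable def Ineg (ε : ℝ) : Finset ℤ := (Iset ε).filter (fun i => i < 0)

lemma st5_mem_Iset {ε : ℝ} {i : ℤ} :
    i ∈ Iset ε ↔ (-(Bval ε) ≤ i ∧ i ≤ Bval ε ∧ i % 2 = 1) := by
  simp [Iset, Finset.mem_filter, Finset.mem_Icc, Int.odd_iff, and_assoc]

lemma st5_mem_Ipos {ε : ℝ} {i : ℤ} :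
    i ∈ Ipos ε ↔ (-(Bval ε) ≤ i ∧ i ≤ Bval ε ∧ i % 2 = 1 ∧ 0 < i) := by
  simp [Ipos, Finset.mem_filter, st5_mem_Iset, and_assoc]

lemma st5_mem_Ineg {ε : ℝ} {i : ℤ} :
    i ∈ Ineg ε ↔ (-(Bval ε) ≤ i ∧ i ≤ Bval ε ∧ i % 2 = 1 ∧ i < 0) := by
  simp [Ineg, Finset.mem_filter, st5_mem_Iset, and_assoc]

lemma st5_B_odd (ε : ℝ) : (Bval ε) % 2 = 1 := by unfold Bval; omega

lemma st5_B13 {ε : ℝ} (hε : ε ∈ Set.Ioo (0:ℝ) (1/32)) : 13 ≤ Bval ε := by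
  obtain ⟨h0, h1⟩ := hε
  have h32 : (32:ℝ) < 1 / ε := by
    rw [lt_div_iff₀ h0]; nlinarith
  have hlog : (5:ℝ) < Real.logb 2 (1/ε) := by
    have : Real.logb 2 32 < Real.logb 2 (1/ε) :=
      Real.logb_lt_logb (by norm_num) (by norm_num) h32
    have h32' : Real.logb 2 32 = 5 := by
      rw [show (32:ℝ) = 2^(5:ℕ) by norm_num, Real.logb_pow, Real.logb_self_eq_one] <;> norm_num
    linarith
  have : (5:ℤ) < ⌈Real.logb 2 (1/ε)⌉ := by
    exact_mod_cast Int.lt_ceil.mpr (by exact_mod_cast hlog)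
  unfold Bval; omega

lemma st5_two_pow_B {ε : ℝ} (hε : ε ∈ Set.Ioo (0:ℝ) (1/32)) :
    (2:ℝ) ^ (-(Bval ε)) ≤ ε^2 / 2 := by
  obtain ⟨h0, h1⟩ := hε
  set c : ℤ := ⌈Real.logb 2 (1 / ε)⌉ with hc
  have hcL : Real.logb 2 (1/ε) ≤ (c:ℝ) := Int.le_ceil _
  have hinv : (1:ℝ)/ε ≤ (2:ℝ) ^ (c:ℝ) := by
    have h2 : (2:ℝ) ^ (Real.logb 2 (1/ε)) = 1/ε := by
      rw [Real.rpow_logb (by norm_num) (by norm_num) (by positivity)]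
    calc (1:ℝ)/ε = (2:ℝ) ^ (Real.logb 2 (1/ε)) := h2.symm
      _ ≤ (2:ℝ) ^ (c:ℝ) := Real.rpow_le_rpow_of_exponent_le (by norm_num) hcL
  have hz : (2:ℝ) ^ (c:ℝ) = (2:ℝ) ^ c := (Real.rpow_intCast 2 c).symm ▸ rfl
  have h1e : (1:ℝ)/ε ≤ (2:ℝ) ^ c := by rw [← Real.rpow_intCast]; exact hinv
  have hB : (2:ℝ) ^ (Bval ε) = 2 * ((2:ℝ)^c * (2:ℝ)^c) := by
    rw [show Bval ε = c + c + 1 by rw [hc]; unfold Bval; ring]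
    rw [zpow_add₀ (by norm_num : (2:ℝ) ≠ 0), zpow_add₀ (by norm_num : (2:ℝ) ≠ 0), zpow_one]
    ring
  have hpc : (0:ℝ) < (2:ℝ)^c := by positivity
  have h2B : 2 / ε^2 ≤ (2:ℝ) ^ (Bval ε) := by
    rw [hB]
    have h4 : 1/ε * (1/ε) ≤ (2:ℝ)^c * (2:ℝ)^c :=
      mul_le_mul h1e h1e (by positivity) (le_of_lt hpc)
    have e1 : (1:ℝ)/ε * (1/ε) = 1/ε^2 := by ring
    have h5 : 2/ε^2 = 2*(1/ε^2) := by ring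
    rw [e1] at h4
    linarith
  rw [zpow_neg, inv_le_comm₀ (by positivity) (by positivity),
    show (ε^2/2)⁻¹ = 2/ε^2 by field_simp]
  exact h2B

/-- A process on `I_ε` (Definition 4 of the paper): at each step `t ≥ 1` and each `i ∈ I_ε`,
an amount `q t i` with `0 ≤ q t i ≤ p t i` of the weight `p t i` moves to position `i - 2`
and the remaining `p t i - q t i` moves to position `i + 2`, clamped to stay in `[-B_ε, B_ε]`;
`p (t+1) i` is the total weight arriving at `i`.  Moreover:
(i) at every step at least `15/16` of the mass on `I_ε⁺` moves down, and
(ii) for every `i ∈ I_ε⁻` whose mass is at least `(1/B_ε⁴) Σ_{j ∈ I_ε⁺} p t j`,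
at most `1/16` of the weight at `i` moves up. -/
structure MProcess (ε : ℝ) where
  p : ℕ → ℤ → ℝ
  q : ℕ → ℤ → ℝ
  q_nonneg : ∀ t i, 0 ≤ q t i
  q_le_p : ∀ t i, q t i ≤ p t i
  update : ∀ t, 1 ≤ t → ∀ i ∈ Iset ε,
    p (t + 1) i =
      (∑ j ∈ (Iset ε).filter (fun j => max (j - 2) (-(Bval ε)) = i), q t j) +
      (∑ j ∈ (Iset ε).filter (fun j => min (j + 2) (Bval ε) = i), (p t j - q t j))
  mass_down : ∀ t, 1 ≤ t →
    (15 / 16 : ℝ) * ∑ i ∈ Ipos ε, p t i ≤ ∑ i ∈ Ipos ε, q t i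
  up_small : ∀ t, 1 ≤ t → ∀ i ∈ Ineg ε,
    (1 / (Bval ε : ℝ) ^ 4) * (∑ j ∈ Ipos ε, p t j) ≤ p t i →
    p t i - q t i ≤ (1 / 16 : ℝ) * p t i

/-- `W_t := Σ_{i ∈ I_ε⁻} 2^i p_i^t + Σ_{i ∈ I_ε⁺} p_i^t`. -/
noncomputable def Wfun (ε : ℝ) (P : MProcess ε) (t : ℕ) : ℝ :=
  (∑ i ∈ Ineg ε, (2 : ℝ) ^ i * P.p t i) + ∑ i ∈ Ipos ε, P.p t i

/-- split of a sum over `Iset` into negative and positive parts -/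
lemma st5_sum_split {ε : ℝ} (f : ℤ → ℝ) :
    ∑ i ∈ Iset ε, f i = (∑ i ∈ Ineg ε, f i) + ∑ i ∈ Ipos ε, f i := by
  rw [Ineg, Ipos]
  rw [← Finset.sum_filter_add_sum_filter_not (Iset ε) (fun i => i < 0) f]
  congr 1
  apply Finset.sum_congr _ (fun _ _ => rfl)
  apply Finset.filter_congr
  intro i hi
  have := st5_mem_Iset.mp hi
  simp only [not_lt]
  constructor <;> intro h <;> omega

lemma st5_maps_down {ε : ℝ} : ∀ j ∈ Iset ε, max (j - 2) (-(Bval ε)) ∈ Iset ε := by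
  intro j hj
  have h := st5_mem_Iset.mp hj
  have hBo := st5_B_odd ε
  rcases max_cases (j-2) (-(Bval ε)) with ⟨h1,h2⟩|⟨h1,h2⟩ <;> rw [h1] <;>
    exact st5_mem_Iset.mpr (by omega)

lemma st5_maps_up {ε : ℝ} : ∀ j ∈ Iset ε, min (j + 2) (Bval ε) ∈ Iset ε := by
  intro j hj
  have h := st5_mem_Iset.mp hj
  have hBo := st5_B_odd ε
  rcases min_cases (j+2) (Bval ε) with ⟨h1,h2⟩|⟨h1,h2⟩ <;> rw [h1] <;>
    exact st5_mem_Iset.mpr (by omega)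

/-- the fundamental weighted-sum identity for one step of the process -/
lemma st5_sum_weight {ε : ℝ} (P : MProcess ε) (w : ℤ → ℝ) {t : ℕ} (ht : 1 ≤ t) :
    ∑ i ∈ Iset ε, w i * P.p (t+1) i
      = ∑ j ∈ Iset ε, (w (max (j-2) (-(Bval ε))) * P.q t j
          + w (min (j+2) (Bval ε)) * (P.p t j - P.q t j)) := by
  have h1 : ∀ i ∈ Iset ε, w i * P.p (t+1) i
      = (∑ j ∈ (Iset ε).filter (fun j => max (j-2) (-(Bval ε)) = i),
            w (max (j-2) (-(Bval ε))) * P.q t j)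
      + (∑ j ∈ (Iset ε).filter (fun j => min (j+2) (Bval ε) = i),
            w (min (j+2) (Bval ε)) * (P.p t j - P.q t j)) := by
    intro i hi
    rw [P.update t ht i hi, mul_add, Finset.mul_sum, Finset.mul_sum]
    congr 1 <;> refine Finset.sum_congr rfl fun j hj => ?_ <;>
      rw [(Finset.mem_filter.mp hj).2]
  rw [Finset.sum_congr rfl h1, Finset.sum_add_distrib,
      Finset.sum_fiberwise_of_maps_to st5_maps_down
        (fun j => w (max (j-2) (-(Bval ε))) * P.q t j),
      Finset.sum_fiberwise_of_maps_to st5_maps_up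
        (fun j => w (min (j+2) (Bval ε)) * (P.p t j - P.q t j)),
      ← Finset.sum_add_distrib]

noncomputable def Sq {ε : ℝ} (P : MProcess ε) (t : ℕ) : ℝ := ∑ i ∈ Ipos ε, P.p t i
noncomputable def Nn {ε : ℝ} (P : MProcess ε) (t : ℕ) : ℝ :=
  ∑ i ∈ Ineg ε, (2:ℝ) ^ i * P.p t i
noncomputable def Psi {ε : ℝ} (P : MProcess ε) (t : ℕ) : ℝ :=
  ∑ i ∈ Ipos ε, (i:ℝ) * P.p t i

lemma st5_p_nonneg {ε : ℝ} (P : MProcess ε) (t : ℕ) (i : ℤ) : 0 ≤ P.p t i :=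
  le_trans (P.q_nonneg t i) (P.q_le_p t i)

lemma st5_Sq_nonneg {ε : ℝ} (P : MProcess ε) (t : ℕ) : 0 ≤ Sq P t :=
  Finset.sum_nonneg fun i _ => st5_p_nonneg P t i

lemma st5_Nn_nonneg {ε : ℝ} (P : MProcess ε) (t : ℕ) : 0 ≤ Nn P t :=
  Finset.sum_nonneg fun i _ => mul_nonneg (by positivity) (st5_p_nonneg P t i)

lemma st5_W_eq {ε : ℝ} (P : MProcess ε) (t : ℕ) : Wfun ε P t = Nn P t + Sq P t := rfl

lemma st5_mass {ε : ℝ} (P : MProcess ε) (hm : (∑ i ∈ Iset ε, P.p 1 i) = 1) :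
    ∀ t, 1 ≤ t → (∑ i ∈ Iset ε, P.p t i) = 1 := by
  intro t ht
  induction t with
  | zero => omega
  | succ n ih =>
    rcases Nat.lt_or_ge 1 (n+1) with h | h
    · have hn : 1 ≤ n := by omega
      have := st5_sum_weight P (fun _ => (1:ℝ)) hn
      simp only [one_mul] at this
      rw [this, ← ih hn]
      exact Finset.sum_congr rfl fun j _ => by ring
    · have : n + 1 = 1 := by omega
      rw [this]; exact hm

lemma st5_p_le_one {ε : ℝ} (P : MProcess ε) (hm : (∑ i ∈ Iset ε, P.p 1 i) = 1)
    {t : ℕ} (ht : 1 ≤ t) {i : ℤ} (hi : i ∈ Iset ε) : P.p t i ≤ 1 := by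
  rw [← st5_mass P hm t ht]
  exact Finset.single_le_sum (fun j _ => st5_p_nonneg P t j) hi

lemma st5_zpow_sub2 (j : ℤ) : (2:ℝ)^(j-2) = (1/4) * (2:ℝ)^j := by
  rw [zpow_sub₀ (by norm_num : (2:ℝ) ≠ 0)]
  norm_num
  ring

lemma st5_zpow_add2 (j : ℤ) : (2:ℝ)^(j+2) = 4 * (2:ℝ)^j := by
  rw [zpow_add₀ (by norm_num : (2:ℝ) ≠ 0)]
  norm_num
  ring

lemma st5_geom (n : ℕ) : ∑ j ∈ Finset.Icc (-(n:ℤ)) (-1), (2:ℝ)^j = 1 - (2:ℝ)^(-(n:ℤ)) := by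
  induction n with
  | zero => simp
  | succ m ih =>
    have hins : Finset.Icc (-(m+1:ℕ):ℤ) (-1) = insert (-(m+1:ℕ):ℤ) (Finset.Icc (-(m:ℕ):ℤ) (-1)) := by
      ext x; simp only [Finset.mem_Icc, Finset.mem_insert]; omega
    have hnot : (-(m+1:ℕ):ℤ) ∉ Finset.Icc (-(m:ℕ):ℤ) (-1) := by
      simp only [Finset.mem_Icc, not_and, not_le]; omega
    rw [hins, Finset.sum_insert hnot, ih]
    have h1 : (-(m+1:ℕ):ℤ) = -(m:ℤ) - 1 := by push_cast; ring
    rw [h1, zpow_sub₀ (by norm_num : (2:ℝ) ≠ 0)]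
    ring

lemma st5_sum_two_pow_Ineg {ε : ℝ} (hε : ε ∈ Set.Ioo (0:ℝ) (1/32)) :
    ∑ j ∈ Ineg ε, (2:ℝ)^j ≤ 1 := by
  have hB := st5_B13 hε
  have hsub : Ineg ε ⊆ Finset.Icc (-(Bval ε)) (-1) := by
    intro i hi
    have := st5_mem_Ineg.mp hi
    simp [Finset.mem_Icc]; omega
  have h1 : ∑ j ∈ Ineg ε, (2:ℝ)^j ≤ ∑ j ∈ Finset.Icc (-(Bval ε)) (-1), (2:ℝ)^j :=
    Finset.sum_le_sum_of_subset_of_nonneg hsub (fun i _ _ => by positivity)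
  have hcast : (-(((Bval ε).toNat : ℕ)) : ℤ) = -(Bval ε) := by
    rw [Int.toNat_of_nonneg (by omega)]
  have h2 := st5_geom (Bval ε).toNat
  rw [hcast] at h2
  rw [h2] at h1
  have : (0:ℝ) < (2:ℝ)^(-(Bval ε)) := by positivity
  linarith

noncomputable def st5_wN : ℤ → ℝ := fun i => if i < 0 then (2:ℝ)^i else 0

noncomputable def st5_GN {ε : ℝ} (P : MProcess ε) (t : ℕ) (thr : ℝ) : ℤ → ℝ := fun j =>
  (if j < 0 then (1/2) * (2:ℝ)^j * P.p t j + (2:ℝ)^j * (4 * min (P.p t j) thr) else 0)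
  + (if j = -(Bval ε) then (3/4) * (2:ℝ)^j * P.p t j else 0)
  + (if j = 1 then (1/2) * P.q t j else 0)

lemma st5_N_point {ε : ℝ} (hε : ε ∈ Set.Ioo (0:ℝ) (1/32)) (P : MProcess ε)
    {t : ℕ} (ht : 1 ≤ t) :
    ∀ j ∈ Iset ε, st5_wN (max (j-2) (-(Bval ε))) * P.q t j
      + st5_wN (min (j+2) (Bval ε)) * (P.p t j - P.q t j)
      ≤ st5_GN P t ((1/(Bval ε:ℝ)^4) * Sq P t) j := by
  have hB := st5_B13 hε
  have hBo := st5_B_odd ε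
  set thr : ℝ := (1/(Bval ε:ℝ)^4) * Sq P t with hthr
  have hthr0 : 0 ≤ thr := by
    have h1 := st5_Sq_nonneg P t
    have hBr : (13:ℝ) ≤ (Bval ε : ℝ) := by exact_mod_cast hB
    have h2 : (0:ℝ) < (Bval ε:ℝ)^4 := by positivity
    rw [hthr]; positivity
  intro j hj
  obtain ⟨hj1, hj2, hj3⟩ := st5_mem_Iset.mp hj
  have hq0 := P.q_nonneg t j
  have hqp := P.q_le_p t j
  have hp0 := st5_p_nonneg P t j
  have h2j : (0:ℝ) < (2:ℝ)^j := by positivity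
  have hmin0 : 0 ≤ min (P.p t j) thr := le_min hp0 hthr0
  by_cases hjn : j < 0
  · -- negative site
    have hup : min (j+2) (Bval ε) = j+2 := min_eq_left (by omega)
    have hupw : st5_wN (j+2) ≤ 4 * (2:ℝ)^j := by
      by_cases hc : j + 2 < 0
      · simp only [st5_wN, if_pos hc, st5_zpow_add2]
        exact le_rfl
      · simp only [st5_wN, if_neg hc]; positivity
    have hpq0 : 0 ≤ P.p t j - P.q t j := by linarith
    have hu : st5_wN (min (j+2) (Bval ε)) * (P.p t j - P.q t j)
        ≤ (1/4)*(2:ℝ)^j*P.p t j + (2:ℝ)^j * (4 * min (P.p t j) thr) := by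
      rw [hup]
      by_cases hheavy : thr ≤ P.p t j
      · have hus := P.up_small t ht j (st5_mem_Ineg.mpr ⟨hj1, hj2, hj3, hjn⟩)
          (by rw [hthr] at hheavy; exact hheavy)
        have h1 : st5_wN (j+2) * (P.p t j - P.q t j) ≤ 4 * (2:ℝ)^j * (P.p t j - P.q t j) :=
          mul_le_mul_of_nonneg_right hupw hpq0
        have h2 : 4 * (2:ℝ)^j * (P.p t j - P.q t j) ≤ 4 * (2:ℝ)^j * ((1/16)*P.p t j) :=
          mul_le_mul_of_nonneg_left hus (by positivity)
        nlinarith [mul_nonneg (le_of_lt h2j) hmin0]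
      · have hmineq : min (P.p t j) thr = P.p t j := min_eq_left (le_of_not_ge hheavy)
        have h1 : st5_wN (j+2) * (P.p t j - P.q t j) ≤ 4 * (2:ℝ)^j * (P.p t j - P.q t j) :=
          mul_le_mul_of_nonneg_right hupw hpq0
        rw [hmineq]
        nlinarith [mul_nonneg (le_of_lt h2j) hq0, mul_nonneg (le_of_lt h2j) hp0]
    have hd : st5_wN (max (j-2) (-(Bval ε))) * P.q t j ≤ (1/4)*(2:ℝ)^j * P.q t j
        + (if j = -(Bval ε) then (3/4) * (2:ℝ)^j * P.p t j else 0) := by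
      by_cases hjB : j = -(Bval ε)
      · have hmax : max (j-2) (-(Bval ε)) = -(Bval ε) := max_eq_right (by omega)
        rw [hmax, if_pos hjB, ← hjB]
        simp only [st5_wN, if_pos hjn]
        nlinarith
      · have hmax : max (j-2) (-(Bval ε)) = j-2 := max_eq_left (by omega)
        rw [hmax, if_neg hjB]
        simp only [st5_wN, if_pos (by omega : j - 2 < 0), st5_zpow_sub2]
        nlinarith
    have hgj : st5_GN P t thr j = ((1/2) * (2:ℝ)^j * P.p t j
        + (2:ℝ)^j * (4 * min (P.p t j) thr))
        + (if j = -(Bval ε) then (3/4) * (2:ℝ)^j * P.p t j else 0) + 0 := by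
      simp only [st5_GN, if_pos hjn, if_neg (by omega : ¬ j = 1)]
    rw [hgj]
    nlinarith [mul_nonneg (le_of_lt h2j) hq0, mul_nonneg (le_of_lt h2j) hp0]
  · -- positive site
    have hjpos : 1 ≤ j := by omega
    have hupz : st5_wN (min (j+2) (Bval ε)) = 0 := by
      simp only [st5_wN, if_neg (by omega : ¬ (min (j+2) (Bval ε) < 0))]
    have hdown : max (j-2) (-(Bval ε)) = j - 2 := max_eq_left (by omega)
    rw [hupz, hdown, zero_mul, add_zero]
    by_cases hj1 : j = 1
    · have hw2 : st5_wN (j - 2) = (1/2 : ℝ) := by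
        simp only [st5_wN, if_pos (by omega : j - 2 < 0), hj1]
        norm_num
      rw [hw2]
      have hgj : st5_GN P t thr j = 0 + 0 + (1/2) * P.q t j := by
        simp only [st5_GN, if_neg (by omega : ¬ j < 0), if_neg (by omega : ¬ j = -(Bval ε)),
          if_pos hj1]
      rw [hgj]; linarith
    · have hw0 : st5_wN (j - 2) = 0 := by
        simp only [st5_wN, if_neg (by omega : ¬ (j - 2 < 0))]
      rw [hw0, zero_mul]
      have hgj : st5_GN P t thr j = 0 + 0 + 0 := by
        simp only [st5_GN, if_neg (by omega : ¬ j < 0), if_neg (by omega : ¬ j = -(Bval ε)),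
          if_neg hj1]
      rw [hgj]; norm_num

lemma st5_sumGN {ε : ℝ} (hε : ε ∈ Set.Ioo (0:ℝ) (1/32)) (P : MProcess ε)
    (t : ℕ) (thr : ℝ) :
    ∑ j ∈ Iset ε, st5_GN P t thr j
      = ((1/2) * Nn P t + 4 * ∑ j ∈ Ineg ε, (2:ℝ)^j * min (P.p t j) thr)
        + (3/4) * (2:ℝ)^(-(Bval ε)) * P.p t (-(Bval ε)) + (1/2) * P.q t 1 := by
  have hB := st5_B13 hε
  have hBo := st5_B_odd ε
  simp only [st5_GN]
  rw [Finset.sum_add_distrib, Finset.sum_add_distrib]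
  congr 1
  · congr 1
    · rw [st5_sum_split (fun j => if j < 0 then (1/2) * (2:ℝ)^j * P.p t j
        + (2:ℝ)^j * (4 * min (P.p t j) thr) else 0)]
      have e2 : ∑ j ∈ Ipos ε, (if j < 0 then (1/2) * (2:ℝ)^j * P.p t j
          + (2:ℝ)^j * (4 * min (P.p t j) thr) else 0) = 0 :=
        Finset.sum_eq_zero fun i hi => by
          have hpos := (st5_mem_Ipos.mp hi).2.2.2
          rw [if_neg (by omega : ¬ (i < 0))]
      rw [e2, add_zero]
      have e1 : ∑ j ∈ Ineg ε, (if j < 0 then (1/2) * (2:ℝ)^j * P.p t j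
          + (2:ℝ)^j * (4 * min (P.p t j) thr) else 0)
          = ∑ j ∈ Ineg ε, ((1/2) * ((2:ℝ)^j * P.p t j)
            + 4 * ((2:ℝ)^j * min (P.p t j) thr)) :=
        Finset.sum_congr rfl fun i hi => by
          rw [if_pos (st5_mem_Ineg.mp hi).2.2.2]; ring
      rw [e1, Finset.sum_add_distrib, ← Finset.mul_sum, ← Finset.mul_sum]
      rfl
    · rw [Finset.sum_ite_eq' (Iset ε) (-(Bval ε)) (fun j => (3/4) * (2:ℝ)^j * P.p t j)]
      rw [if_pos (st5_mem_Iset.mpr (by omega))]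
  · rw [Finset.sum_ite_eq' (Iset ε) 1 (fun j => (1/2) * P.q t j)]
    rw [if_pos (st5_mem_Iset.mpr (by omega))]

lemma st5_N_step {ε : ℝ} (hε : ε ∈ Set.Ioo (0:ℝ) (1/32)) (P : MProcess ε)
    (hm : (∑ i ∈ Iset ε, P.p 1 i) = 1) {t : ℕ} (ht : 1 ≤ t) :
    Nn P (t+1) ≤ (1/2) * Nn P t + (1/2) * P.q t 1
      + 4 * ((1/(Bval ε:ℝ)^4) * Sq P t) + (3/8)*ε^2 := by
  have hB := st5_B13 hε
  have hBo := st5_B_odd ε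
  have hBr : (13:ℝ) ≤ (Bval ε : ℝ) := by exact_mod_cast hB
  set thr : ℝ := (1/(Bval ε:ℝ)^4) * Sq P t with hthr
  have hthr0 : 0 ≤ thr := by
    have h1 := st5_Sq_nonneg P t
    have h2 : (0:ℝ) < (Bval ε:ℝ)^4 := by positivity
    rw [hthr]; positivity
  have hNl : Nn P (t+1) = ∑ i ∈ Iset ε, st5_wN i * P.p (t+1) i := by
    rw [st5_sum_split (fun i => st5_wN i * P.p (t+1) i)]
    have e1 : ∑ i ∈ Ineg ε, st5_wN i * P.p (t+1) i = Nn P (t+1) :=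
      Finset.sum_congr rfl fun i hi => by
        simp only [st5_wN, if_pos (st5_mem_Ineg.mp hi).2.2.2]
    have e2 : ∑ i ∈ Ipos ε, st5_wN i * P.p (t+1) i = 0 :=
      Finset.sum_eq_zero fun i hi => by
        have hpos := (st5_mem_Ipos.mp hi).2.2.2
        simp only [st5_wN, if_neg (by omega : ¬ (i < 0)), zero_mul]
    rw [e1, e2, add_zero]
  have hbound : ∑ i ∈ Iset ε, st5_wN i * P.p (t+1) i ≤ ∑ j ∈ Iset ε, st5_GN P t thr j := by
    rw [st5_sum_weight P st5_wN ht]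
    exact Finset.sum_le_sum (st5_N_point hε P ht)
  have hlight : ∑ j ∈ Ineg ε, (2:ℝ)^j * min (P.p t j) thr ≤ thr := by
    have h1 : ∑ j ∈ Ineg ε, (2:ℝ)^j * min (P.p t j) thr
        ≤ ∑ j ∈ Ineg ε, (2:ℝ)^j * thr :=
      Finset.sum_le_sum fun i _ => mul_le_mul_of_nonneg_left (min_le_right _ _) (by positivity)
    rw [← Finset.sum_mul] at h1
    calc ∑ j ∈ Ineg ε, (2:ℝ)^j * min (P.p t j) thr ≤ (∑ j ∈ Ineg ε, (2:ℝ)^j) * thr := h1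
      _ ≤ 1 * thr := mul_le_mul_of_nonneg_right (st5_sum_two_pow_Ineg hε) hthr0
      _ = thr := one_mul thr
  have hbdry : (3/4) * (2:ℝ)^(-(Bval ε)) * P.p t (-(Bval ε)) ≤ (3/8)*ε^2 := by
    have h1 : (2:ℝ)^(-(Bval ε)) ≤ ε^2/2 := st5_two_pow_B hε
    have h2 : P.p t (-(Bval ε)) ≤ 1 := st5_p_le_one P hm ht (st5_mem_Iset.mpr (by omega))
    have h3 : (0:ℝ) ≤ P.p t (-(Bval ε)) := st5_p_nonneg P t (-(Bval ε))
    have h4 : (0:ℝ) < (2:ℝ)^(-(Bval ε)) := by positivity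
    nlinarith
  rw [hNl]
  calc ∑ i ∈ Iset ε, st5_wN i * P.p (t+1) i ≤ ∑ j ∈ Iset ε, st5_GN P t thr j := hbound
    _ = ((1/2) * Nn P t + 4 * ∑ j ∈ Ineg ε, (2:ℝ)^j * min (P.p t j) thr)
        + (3/4) * (2:ℝ)^(-(Bval ε)) * P.p t (-(Bval ε)) + (1/2) * P.q t 1 :=
        st5_sumGN hε P t thr
    _ ≤ ((1/2) * Nn P t + 4 * thr) + (3/8)*ε^2 + (1/2) * P.q t 1 := by linarith
    _ = (1/2) * Nn P t + (1/2) * P.q t 1 + 4 * thr + (3/8)*ε^2 := by ring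

noncomputable def st5_wS : ℤ → ℝ := fun i => if 0 < i then (1:ℝ) else 0
noncomputable def st5_wP : ℤ → ℝ := fun i => if 0 < i then (i:ℝ) else 0

lemma st5_S_decomp {ε : ℝ} (P : MProcess ε) (t : ℕ) :
    ∑ i ∈ Iset ε, st5_wS i * P.p t i = Sq P t := by
  rw [st5_sum_split (fun i => st5_wS i * P.p t i)]
  have e1 : ∑ i ∈ Ineg ε, st5_wS i * P.p t i = 0 :=
    Finset.sum_eq_zero fun i hi => by
      have hneg := (st5_mem_Ineg.mp hi).2.2.2
      simp only [st5_wS, if_neg (by omega : ¬ (0 < i)), zero_mul]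
  have e2 : ∑ i ∈ Ipos ε, st5_wS i * P.p t i = Sq P t :=
    Finset.sum_congr rfl fun i hi => by
      simp only [st5_wS, if_pos (st5_mem_Ipos.mp hi).2.2.2, one_mul]
  rw [e1, e2, zero_add]

lemma st5_P_decomp {ε : ℝ} (P : MProcess ε) (t : ℕ) :
    ∑ i ∈ Iset ε, st5_wP i * P.p t i = Psi P t := by
  rw [st5_sum_split (fun i => st5_wP i * P.p t i)]
  have e1 : ∑ i ∈ Ineg ε, st5_wP i * P.p t i = 0 :=
    Finset.sum_eq_zero fun i hi => by
      have hneg := (st5_mem_Ineg.mp hi).2.2.2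
      simp only [st5_wP, if_neg (by omega : ¬ (0 < i)), zero_mul]
  have e2 : ∑ i ∈ Ipos ε, st5_wP i * P.p t i = Psi P t :=
    Finset.sum_congr rfl fun i hi => by
      simp only [st5_wP, if_pos (st5_mem_Ipos.mp hi).2.2.2]
  rw [e1, e2, zero_add]

lemma st5_S_step {ε : ℝ} (hε : ε ∈ Set.Ioo (0:ℝ) (1/32)) (P : MProcess ε)
    {t : ℕ} (ht : 1 ≤ t) :
    Sq P (t+1) = Sq P t - P.q t 1 + (P.p t (-1) - P.q t (-1)) := by
  have hB := st5_B13 hε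
  have hBo := st5_B_odd ε
  rw [← st5_S_decomp P (t+1), st5_sum_weight P st5_wS ht]
  have hpoint : ∀ j ∈ Iset ε,
      st5_wS (max (j-2) (-(Bval ε))) * P.q t j + st5_wS (min (j+2) (Bval ε)) * (P.p t j - P.q t j)
      = (if 0 < j then P.p t j else 0) - (if j = 1 then P.q t j else 0)
        + (if j = -1 then P.p t j - P.q t j else 0) := by
    intro j hj
    obtain ⟨hj1, hj2, hj3⟩ := st5_mem_Iset.mp hj
    by_cases hjn : j < 0
    · have hd : st5_wS (max (j-2) (-(Bval ε))) = 0 := by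
        simp only [st5_wS, if_neg (by omega : ¬ (0 < max (j-2) (-(Bval ε))))]
      have hup : min (j+2) (Bval ε) = j+2 := min_eq_left (by omega)
      rw [hd, hup, zero_mul, if_neg (by omega : ¬ 0 < j), if_neg (by omega : ¬ j = 1)]
      by_cases hj1' : j = -1
      · rw [if_pos hj1', hj1']
        simp only [st5_wS]
        norm_num
      · rw [if_neg hj1']
        simp only [st5_wS, if_neg (by omega : ¬ (0 < j + 2)), zero_mul]
        ring
    · have hu : st5_wS (min (j+2) (Bval ε)) = 1 := by
        simp only [st5_wS, if_pos (by omega : 0 < min (j+2) (Bval ε))]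
      rw [hu, if_pos (by omega : 0 < j), if_neg (by omega : ¬ j = -1)]
      by_cases hj1' : j = 1
      · have hd : st5_wS (max (j-2) (-(Bval ε))) = 0 := by
          simp only [st5_wS, if_neg (by omega : ¬ (0 < max (j-2) (-(Bval ε))))]
        rw [hd, if_pos hj1']; ring
      · have hd : st5_wS (max (j-2) (-(Bval ε))) = 1 := by
          simp only [st5_wS, if_pos (by omega : 0 < max (j-2) (-(Bval ε)))]
        rw [hd, if_neg hj1']; ring
  rw [Finset.sum_congr rfl hpoint]
  rw [Finset.sum_add_distrib, Finset.sum_sub_distrib]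
  rw [Finset.sum_ite_eq' (Iset ε) 1 (fun j => P.q t j),
      Finset.sum_ite_eq' (Iset ε) (-1) (fun j => P.p t j - P.q t j),
      if_pos (st5_mem_Iset.mpr (by omega)), if_pos (st5_mem_Iset.mpr (by omega))]
  have : ∑ j ∈ Iset ε, (if 0 < j then P.p t j else 0) = Sq P t := by
    rw [st5_sum_split (fun j => if 0 < j then P.p t j else 0)]
    have e1 : ∑ i ∈ Ineg ε, (if 0 < i then P.p t i else 0) = 0 :=
      Finset.sum_eq_zero fun i hi => by
        have := (st5_mem_Ineg.mp hi).2.2.2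
        rw [if_neg (by omega : ¬ (0 < i))]
    have e2 : ∑ i ∈ Ipos ε, (if 0 < i then P.p t i else 0) = Sq P t :=
      Finset.sum_congr rfl fun i hi => by
        rw [if_pos (st5_mem_Ipos.mp hi).2.2.2]
    rw [e1, e2, zero_add]
  rw [this]

lemma st5_u_nonneg {ε : ℝ} (P : MProcess ε) (t : ℕ) : 0 ≤ P.p t (-1) - P.q t (-1) := by
  have := P.q_le_p t (-1); linarith

lemma st5_u_le {ε : ℝ} (hε : ε ∈ Set.Ioo (0:ℝ) (1/32)) (P : MProcess ε)
    {t : ℕ} (ht : 1 ≤ t) :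
    P.p t (-1) - P.q t (-1) ≤ (1/8) * Nn P t + (1/(Bval ε:ℝ)^4) * Sq P t := by
  have hB := st5_B13 hε
  have hBo := st5_B_odd ε
  have hBr : (13:ℝ) ≤ (Bval ε : ℝ) := by exact_mod_cast hB
  have hS0 := st5_Sq_nonneg P t
  have hN0 := st5_Nn_nonneg P t
  have hthr0 : (0:ℝ) ≤ (1/(Bval ε:ℝ)^4) * Sq P t := by positivity
  have hmem : (-1 : ℤ) ∈ Ineg ε := st5_mem_Ineg.mpr (by omega)
  by_cases hheavy : (1/(Bval ε:ℝ)^4) * Sq P t ≤ P.p t (-1)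
  · have hus := P.up_small t ht (-1) hmem hheavy
    have hsingle : (2:ℝ)^(-1:ℤ) * P.p t (-1) ≤ Nn P t :=
      Finset.single_le_sum (f := fun i => (2:ℝ)^i * P.p t i)
        (fun i _ => mul_nonneg (by positivity) (st5_p_nonneg P t i)) hmem
    have h2 : (2:ℝ)^(-1:ℤ) = 1/2 := by norm_num
    rw [h2] at hsingle
    linarith
  · push_neg at hheavy
    have := P.q_nonneg t (-1)
    linarith

lemma st5_Psi_step {ε : ℝ} (hε : ε ∈ Set.Ioo (0:ℝ) (1/32)) (P : MProcess ε)
    {t : ℕ} (ht : 1 ≤ t) :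
    Psi P (t+1) ≤ Psi P t - (7/4) * Sq P t + P.q t 1 + (P.p t (-1) - P.q t (-1)) := by
  have hB := st5_B13 hε
  have hBo := st5_B_odd ε
  rw [← st5_P_decomp P (t+1), st5_sum_weight P st5_wP ht]
  have hpoint : ∀ j ∈ Iset ε,
      st5_wP (max (j-2) (-(Bval ε))) * P.q t j + st5_wP (min (j+2) (Bval ε)) * (P.p t j - P.q t j)
      ≤ (if 0 < j then (j:ℝ) * P.p t j + 2 * P.p t j - 4 * P.q t j else 0)
        + (if j = 1 then P.q t j else 0)
        + (if j = -1 then P.p t j - P.q t j else 0) := by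
    intro j hj
    obtain ⟨hj1, hj2, hj3⟩ := st5_mem_Iset.mp hj
    have hq0 := P.q_nonneg t j
    have hqp := P.q_le_p t j
    have hp0 := st5_p_nonneg P t j
    by_cases hjn : j < 0
    · have hd : st5_wP (max (j-2) (-(Bval ε))) = 0 := by
        simp only [st5_wP, if_neg (by omega : ¬ (0 < max (j-2) (-(Bval ε))))]
      have hup : min (j+2) (Bval ε) = j+2 := min_eq_left (by omega)
      rw [hd, hup, zero_mul, if_neg (by omega : ¬ 0 < j), if_neg (by omega : ¬ j = 1)]
      by_cases hj1' : j = -1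
      · rw [if_pos hj1', hj1']
        simp only [st5_wP]
        norm_num
      · rw [if_neg hj1']
        simp only [st5_wP, if_neg (by omega : ¬ (0 < j + 2)), zero_mul]
        norm_num
    · rw [if_pos (by omega : 0 < j), if_neg (by omega : ¬ j = -1)]
      have hu1 : st5_wP (min (j+2) (Bval ε)) = ((min (j+2) (Bval ε) : ℤ) : ℝ) := by
        simp only [st5_wP, if_pos (by omega : 0 < min (j+2) (Bval ε))]
      have hu2 : ((min (j+2) (Bval ε) : ℤ) : ℝ) ≤ ((j:ℝ) + 2) := by
        have h := min_le_left (j+2) (Bval ε)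
        exact_mod_cast h
      have hup_bd : st5_wP (min (j+2) (Bval ε)) * (P.p t j - P.q t j)
          ≤ ((j:ℝ) + 2) * (P.p t j - P.q t j) := by
        rw [hu1]
        exact mul_le_mul_of_nonneg_right hu2 (by linarith)
      by_cases hj1' : j = 1
      · have hd : st5_wP (max (j-2) (-(Bval ε))) = 0 := by
          simp only [st5_wP, if_neg (by omega : ¬ (0 < max (j-2) (-(Bval ε))))]
        rw [hd, if_pos hj1', zero_mul, zero_add]
        subst hj1'
        push_cast at hup_bd ⊢
        linarith
      · have hmax : max (j-2) (-(Bval ε)) = j - 2 := max_eq_left (by omega)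
        have hd : st5_wP (max (j-2) (-(Bval ε))) = ((j:ℝ) - 2) := by
          rw [hmax]
          simp only [st5_wP, if_pos (by omega : 0 < j - 2)]
          push_cast; ring
        rw [hd, if_neg hj1', add_zero]
        nlinarith
  calc ∑ j ∈ Iset ε, (st5_wP (max (j-2) (-(Bval ε))) * P.q t j
        + st5_wP (min (j+2) (Bval ε)) * (P.p t j - P.q t j))
      ≤ ∑ j ∈ Iset ε, ((if 0 < j then (j:ℝ) * P.p t j + 2 * P.p t j - 4 * P.q t j else 0)
        + (if j = 1 then P.q t j else 0)
        + (if j = -1 then P.p t j - P.q t j else 0)) := Finset.sum_le_sum hpoint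
    _ = (Psi P t + 2 * Sq P t - 4 * ∑ i ∈ Ipos ε, P.q t i) + P.q t 1
        + (P.p t (-1) - P.q t (-1)) := by
        rw [Finset.sum_add_distrib, Finset.sum_add_distrib]
        rw [Finset.sum_ite_eq' (Iset ε) 1 (fun j => P.q t j),
            Finset.sum_ite_eq' (Iset ε) (-1) (fun j => P.p t j - P.q t j),
            if_pos (st5_mem_Iset.mpr (by omega)), if_pos (st5_mem_Iset.mpr (by omega))]
        congr 1
        congr 1
        rw [st5_sum_split (fun j => if 0 < j then (j:ℝ) * P.p t j + 2 * P.p t j - 4 * P.q t j else 0)]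
        have e1 : ∑ i ∈ Ineg ε, (if 0 < i then (i:ℝ) * P.p t i + 2 * P.p t i - 4 * P.q t i else 0) = 0 :=
          Finset.sum_eq_zero fun i hi => by
            have := (st5_mem_Ineg.mp hi).2.2.2
            rw [if_neg (by omega : ¬ (0 < i))]
        have e2 : ∑ i ∈ Ipos ε, (if 0 < i then (i:ℝ) * P.p t i + 2 * P.p t i - 4 * P.q t i else 0)
            = ∑ i ∈ Ipos ε, ((i:ℝ) * P.p t i + 2 * P.p t i - 4 * P.q t i) :=
          Finset.sum_congr rfl fun i hi => by
            rw [if_pos (st5_mem_Ipos.mp hi).2.2.2]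
        rw [e1, e2, zero_add]
        unfold Psi Sq
        rw [Finset.sum_sub_distrib, Finset.sum_add_distrib, ← Finset.mul_sum, ← Finset.mul_sum]
    _ ≤ Psi P t - (7/4) * Sq P t + P.q t 1 + (P.p t (-1) - P.q t (-1)) := by
        have hmd := P.mass_down t ht
        have := st5_Sq_nonneg P t
        unfold Sq at *
        linarith

lemma st5_S_le_Psi {ε : ℝ} (P : MProcess ε) (t : ℕ) : Sq P t ≤ Psi P t :=
  Finset.sum_le_sum fun i hi => by
    have h1 := (st5_mem_Ipos.mp hi).2.2.2
    have hp := st5_p_nonneg P t i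
    have : (1:ℝ) ≤ (i:ℝ) := by exact_mod_cast h1
    nlinarith

lemma st5_Psi_nonneg {ε : ℝ} (P : MProcess ε) (t : ℕ) : 0 ≤ Psi P t :=
  Finset.sum_nonneg fun i hi => by
    have h1 := (st5_mem_Ipos.mp hi).2.2.2
    have hp := st5_p_nonneg P t i
    have : (0:ℝ) ≤ (i:ℝ) := by exact_mod_cast le_of_lt h1
    positivity

lemma st5_Psi_le_BS {ε : ℝ} (P : MProcess ε) (t : ℕ) :
    Psi P t ≤ (Bval ε:ℝ) * Sq P t := by
  unfold Psi Sq
  rw [Finset.mul_sum]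
  refine Finset.sum_le_sum fun i hi => ?_
  have h1 := (st5_mem_Ipos.mp hi).2.1
  have hp := st5_p_nonneg P t i
  have : (i:ℝ) ≤ (Bval ε:ℝ) := by exact_mod_cast h1
  nlinarith

lemma st5_W_step {ε : ℝ} (hε : ε ∈ Set.Ioo (0:ℝ) (1/32)) (P : MProcess ε)
    (hm : (∑ i ∈ Iset ε, P.p 1 i) = 1) {t : ℕ} (ht : 1 ≤ t) :
    Wfun ε P (t+1) ≤ Wfun ε P t - (3/8)*Nn P t - (1/2)*P.q t 1
      + 5*((1/(Bval ε:ℝ)^4)*Sq P t) + (3/8)*ε^2 := by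
  have hN := st5_N_step hε P hm ht
  have hS := st5_S_step hε P ht
  have hu := st5_u_le hε P ht
  rw [st5_W_eq, st5_W_eq]
  linarith

lemma st5_W_tele {ε : ℝ} (hε : ε ∈ Set.Ioo (0:ℝ) (1/32)) (P : MProcess ε)
    (hm : (∑ i ∈ Iset ε, P.p 1 i) = 1) {t : ℕ} (ht : 1 ≤ t) (n : ℕ) :
    Wfun ε P (t+n) ≤ Wfun ε P t
      - (3/8)*(∑ k ∈ Finset.range n, Nn P (t+k))
      - (1/2)*(∑ k ∈ Finset.range n, P.q (t+k) 1)
      + 5*((1/(Bval ε:ℝ)^4) * (∑ k ∈ Finset.range n, Sq P (t+k)))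
      + (n:ℝ)*((3/8)*ε^2) := by
  induction n with
  | zero => simp
  | succ m ih =>
    have ht' : 1 ≤ t + m := by omega
    have hstep := st5_W_step hε P hm ht'
    rw [show t + (m+1) = (t+m)+1 by omega] at *
    rw [Finset.sum_range_succ, Finset.sum_range_succ, Finset.sum_range_succ]
    push_cast
    linarith

lemma st5_S_low {ε : ℝ} (hε : ε ∈ Set.Ioo (0:ℝ) (1/32)) (P : MProcess ε)
    {t : ℕ} (ht : 1 ≤ t) (n : ℕ) :
    Sq P t - (∑ k ∈ Finset.range n, P.q (t+k) 1) ≤ Sq P (t+n) := by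
  induction n with
  | zero => simp
  | succ m ih =>
    have ht' : 1 ≤ t + m := by omega
    have hstep := st5_S_step hε P ht'
    have huu := st5_u_nonneg P (t+m)
    rw [show t + (m+1) = (t+m)+1 by omega]
    rw [Finset.sum_range_succ]
    rw [hstep]
    linarith

lemma st5_SS_low {ε : ℝ} (hε : ε ∈ Set.Ioo (0:ℝ) (1/32)) (P : MProcess ε)
    {t : ℕ} (ht : 1 ≤ t) (n : ℕ) :
    (n:ℝ) * (Sq P t - (∑ k ∈ Finset.range n, P.q (t+k) 1))
      ≤ ∑ k ∈ Finset.range n, Sq P (t+k) := by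
  have h1 : ∀ k ∈ Finset.range n,
      Sq P t - (∑ j ∈ Finset.range n, P.q (t+j) 1) ≤ Sq P (t+k) := by
    intro k hk
    have hk' : k ≤ n := le_of_lt (Finset.mem_range.mp hk)
    have hsub : ∑ j ∈ Finset.range k, P.q (t+j) 1 ≤ ∑ j ∈ Finset.range n, P.q (t+j) 1 :=
      Finset.sum_le_sum_of_subset_of_nonneg
        (Finset.range_subset_range.mpr hk') (fun j _ _ => P.q_nonneg (t+j) 1)
    have := st5_S_low hε P ht k
    linarith
  calc (n:ℝ) * (Sq P t - (∑ k ∈ Finset.range n, P.q (t+k) 1))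
      = ∑ _k ∈ Finset.range n, (Sq P t - (∑ j ∈ Finset.range n, P.q (t+j) 1)) := by
        rw [Finset.sum_const, Finset.card_range, nsmul_eq_mul]
    _ ≤ ∑ k ∈ Finset.range n, Sq P (t+k) := Finset.sum_le_sum h1

lemma st5_Psi_tele {ε : ℝ} (hε : ε ∈ Set.Ioo (0:ℝ) (1/32)) (P : MProcess ε)
    {t : ℕ} (ht : 1 ≤ t) (n : ℕ) :
    Psi P (t+n) ≤ Psi P t - (7/4)*(∑ k ∈ Finset.range n, Sq P (t+k))
      + (∑ k ∈ Finset.range n, P.q (t+k) 1)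
      + (∑ k ∈ Finset.range n, (P.p (t+k) (-1) - P.q (t+k) (-1))) := by
  induction n with
  | zero => simp
  | succ m ih =>
    have ht' : 1 ≤ t + m := by omega
    have hstep := st5_Psi_step hε P ht'
    rw [show t + (m+1) = (t+m)+1 by omega] at *
    rw [Finset.sum_range_succ, Finset.sum_range_succ, Finset.sum_range_succ]
    linarith

lemma st5_U_le {ε : ℝ} (hε : ε ∈ Set.Ioo (0:ℝ) (1/32)) (P : MProcess ε)
    {t : ℕ} (ht : 1 ≤ t) (n : ℕ) :
    ∑ k ∈ Finset.range n, (P.p (t+k) (-1) - P.q (t+k) (-1))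
      ≤ (1/8)*(∑ k ∈ Finset.range n, Nn P (t+k))
        + (1/(Bval ε:ℝ)^4) * (∑ k ∈ Finset.range n, Sq P (t+k)) := by
  rw [Finset.mul_sum, Finset.mul_sum, ← Finset.sum_add_distrib]
  exact Finset.sum_le_sum fun k _ => st5_u_le hε P (by omega : 1 ≤ t + k)

lemma st5_eg_s1 (b Q NN SS St Sst y : ℝ) (hb : 13 ≤ b) (hQ0 : 0 ≤ Q) (hSt0 : 0 ≤ St)
    (hy0 : 0 ≤ y)
    (hF2 : b*St - b*Q ≤ SS) (hF3 : Sst ≤ b*St - (7/4)*SS + Q + (1/8)*NN + y) :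
    Sst ≤ 2*b*Q + (1/8)*NN + y := by
  nlinarith [mul_nonneg (show (0:ℝ) ≤ b by linarith) hSt0,
    mul_nonneg (show (0:ℝ) ≤ b - 4 by linarith) hQ0]

lemma st5_eg_s5 (b Q NN SS St y : ℝ) (hb : 13 ≤ b) (hQ0 : 0 ≤ Q) (hNN0 : 0 ≤ NN)
    (hSS0 : 0 ≤ SS) (hy0 : 0 ≤ y)
    (hby : b*y ≤ SS/2197)
    (s2 : (3/2)*SS ≤ b*St + Q + (1/8)*NN)
    (s3 : St ≤ (2*b+1)*Q + (1/8)*NN + y) :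
    SS ≤ (3/2)*b^2*Q + (1/4)*b*NN := by
  have hb0 : (0:ℝ) < b := by linarith
  have hs4 : b*St ≤ b*((2*b+1)*Q + (1/8)*NN + y) := mul_le_mul_of_nonneg_left s3 hb0.le
  nlinarith [mul_nonneg (show (0:ℝ) ≤ b^2 - 5*b - 5 by nlinarith) hQ0,
    mul_nonneg (show (0:ℝ) ≤ b - 1 by linarith) hNN0,
    mul_nonneg hb0.le hQ0, mul_nonneg hb0.le hNN0]

lemma st5_eg_wlow (b Q NN Wst eps y : ℝ) (hb : 13 ≤ b) (hQ0 : 0 ≤ Q) (hNN0 : 0 ≤ NN)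
    (hy0 : 0 ≤ y)
    (w0 : Wst ≤ (5/8)*NN + (2*b+1/2)*Q + 5*y + (3/8)*eps^2)
    (s6 : 5*y ≤ (15/338)*Q + (5/8788)*NN) :
    Wst - eps^2 ≤ 3*b*(NN+Q) := by
  nlinarith [mul_nonneg (show (0:ℝ) ≤ b - 1 by linarith) hNN0,
    mul_nonneg (show (0:ℝ) ≤ b - 1 by linarith) hQ0, sq_nonneg eps]

lemma st5_eg_eps (b eps NN Q : ℝ) (hb : 13 ≤ b) (heps0 : 0 < eps) (heps1 : eps < 1/32)
    (hB21 : 21*eps*b^2 ≤ NN + Q) :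
    (3/8)*b*eps^2 + eps^2 ≤ (1/17472)*(NN+Q) := by
  have hb0 : (0:ℝ) < b := by linarith
  have hbe : 13*(b*eps) ≤ eps*b^2 := by
    nlinarith [mul_nonneg (mul_nonneg hb0.le heps0.le) (show (0:ℝ) ≤ b - 13 by linarith)]
  have hA : eps^2 ≤ (1/8)*(b*eps^2) := by
    nlinarith [mul_nonneg (sq_nonneg eps) (show (0:ℝ) ≤ b - 8 by linarith)]
  have hBB : b*eps^2 ≤ (b*eps)*(1/32) := by
    nlinarith [mul_nonneg (mul_nonneg hb0.le heps0.le) (show (0:ℝ) ≤ 1/32 - eps by linarith)]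
  nlinarith

lemma st5_eg_wdiv (b Q NN y eps Wst : ℝ) (hb : 13 ≤ b) (hQ0 : 0 ≤ Q) (hNN0 : 0 ≤ NN)
    (hy0 : 0 ≤ y) (heps0 : 0 < eps)
    (w0 : Wst ≤ (5/8)*NN + (2*b+1/2)*Q + 5*y + (3/8)*eps^2) :
    Wst/(40*b) ≤ (1/832)*NN + (27/520)*Q + 5*y + eps^2 := by
  have hb0 : (0:ℝ) < b := by linarith
  have hd0 : (0:ℝ) < 40*b := by linarith
  have h1 : Wst/(40*b) ≤ ((5/8)*NN + (2*b+1/2)*Q + 5*y + (3/8)*eps^2)/(40*b) :=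
    (div_le_div_iff_of_pos_right hd0).mpr w0
  have h2 : ((5/8)*NN + (2*b+1/2)*Q + 5*y + (3/8)*eps^2)/(40*b)
      = (5/8)*NN/(40*b) + ((2*b+1/2)*Q)/(40*b) + (5*y)/(40*b) + ((3/8)*eps^2)/(40*b) := by
    field_simp
  have h3 : (5/8)*NN/(40*b) ≤ (1/832)*NN := by
    rw [div_le_iff₀ hd0]
    nlinarith [mul_nonneg (show (0:ℝ) ≤ b - 13 by linarith) hNN0]
  have h4 : ((2*b+1/2)*Q)/(40*b) ≤ (27/520)*Q := by
    rw [div_le_iff₀ hd0]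
    nlinarith [mul_nonneg (show (0:ℝ) ≤ b - 13 by linarith) hQ0]
  have h5 : (5*y)/(40*b) ≤ 5*y := div_le_self (by positivity) (by linarith)
  have h6 : ((3/8)*eps^2)/(40*b) ≤ eps^2 := by
    apply le_trans (div_le_self (by positivity) (by linarith))
    nlinarith [sq_nonneg eps]
  rw [h2] at h1
  linarith

set_option maxHeartbeats 2000000 in
lemma st5_endgame (b W0 Wst Q NN SS St Sst eps : ℝ)
    (hb : 13 ≤ b) (heps0 : 0 < eps) (heps1 : eps < 1/32)
    (hQ0 : 0 ≤ Q) (hNN0 : 0 ≤ NN) (hSS0 : 0 ≤ SS) (hSt0 : 0 ≤ St) (hSst0 : 0 ≤ Sst)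
    (hF1 : Wst ≤ W0 - (3/8)*NN - (1/2)*Q + 5*(SS/b^4) + (3/8)*b*eps^2)
    (hF2 : b*St - b*Q ≤ SS)
    (hF2b : St ≤ Q + Sst)
    (hF3 : Sst ≤ b*St - (7/4)*SS + Q + (1/8)*NN + SS/b^4)
    (hF4 : Wst ≤ (1/2)*NN + (1/2)*Q + 4*(SS/b^4) + (3/8)*eps^2 + Sst)
    (hF6 : 64*eps*b^3 < Wst) :
    Wst + Wst/(40*b) ≤ W0 := by
  have hb0 : (0:ℝ) < b := by linarith
  have hb2 : (169:ℝ) ≤ b^2 := by nlinarith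
  have hb3 : (2197:ℝ) ≤ b^3 := by nlinarith
  have hb4 : (28561:ℝ) ≤ b^4 := by nlinarith
  have hb4p : (0:ℝ) < b^4 := by positivity
  have hy0 : 0 ≤ SS/b^4 := by positivity
  have hy1 : SS/b^4 ≤ SS/28561 := div_le_div_of_nonneg_left hSS0 (by norm_num) hb4
  have hby : b*(SS/b^4) ≤ SS/2197 := by
    have e : b*(SS/b^4) = SS/b^3 := by field_simp
    rw [e]
    exact div_le_div_of_nonneg_left hSS0 (by norm_num) hb3
  have s1 : Sst ≤ 2*b*Q + (1/8)*NN + SS/b^4 :=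
    st5_eg_s1 b Q NN SS St Sst (SS/b^4) hb hQ0 hSt0 hy0 hF2 hF3
  have s2 : (3/2)*SS ≤ b*St + Q + (1/8)*NN := by
    linarith [hF3, hSst0, hy1, hSS0]
  have s3 : St ≤ (2*b+1)*Q + (1/8)*NN + SS/b^4 := by linarith [hF2b, s1]
  have s5 : SS ≤ (3/2)*b^2*Q + (1/4)*b*NN :=
    st5_eg_s5 b Q NN SS St (SS/b^4) hb hQ0 hNN0 hSS0 hy0 hby s2 s3
  have s6 : 5*(SS/b^4) ≤ (15/338)*Q + (5/8788)*NN := by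
    have h1 : SS/b^4 ≤ ((3/2)*b^2*Q + (1/4)*b*NN)/b^4 := (div_le_div_iff_of_pos_right hb4p).mpr s5
    have h2 : ((3/2)*b^2*Q + (1/4)*b*NN)/b^4 = (3/2)*(Q/b^2) + (1/4)*(NN/b^3) := by
      field_simp
    have h3 : Q/b^2 ≤ Q/169 := div_le_div_of_nonneg_left hQ0 (by norm_num) hb2
    have h4 : NN/b^3 ≤ NN/2197 := div_le_div_of_nonneg_left hNN0 (by norm_num) hb3
    rw [h2] at h1
    linarith
  have w0 : Wst ≤ (5/8)*NN + (2*b+1/2)*Q + 5*(SS/b^4) + (3/8)*eps^2 := by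
    linarith [hF4, s1]
  have wlow : Wst - eps^2 ≤ 3*b*(NN+Q) :=
    st5_eg_wlow b Q NN Wst eps (SS/b^4) hb hQ0 hNN0 hy0 w0 s6
  have wdiv : Wst/(40*b) ≤ (1/832)*NN + (27/520)*Q + 5*(SS/b^4) + eps^2 :=
    st5_eg_wdiv b Q NN (SS/b^4) eps Wst hb hQ0 hNN0 hy0 heps0 w0
  have hB21 : 21*eps*b^2 ≤ NN + Q := by
    have hA : 63*eps*b^3 ≤ Wst - eps^2 := by
      have e1 : eps*eps ≤ eps*(1/32) := mul_le_mul_of_nonneg_left (le_of_lt heps1) heps0.le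
      have e2 : eps*1 ≤ eps*b^3 := mul_le_mul_of_nonneg_left (by linarith) heps0.le
      have e3 : eps^2 = eps*eps := by ring
      have e4 : eps*(1/32) ≤ eps*1 := mul_le_mul_of_nonneg_left (by norm_num) heps0.le
      linarith [hF6]
    have h1 : 3*b*(21*eps*b^2) ≤ 3*b*(NN+Q) := by
      calc 3*b*(21*eps*b^2) = 63*eps*b^3 := by ring
        _ ≤ Wst - eps^2 := hA
        _ ≤ 3*b*(NN+Q) := wlow
    exact le_of_mul_le_mul_left (by linarith [h1]) (by linarith : (0:ℝ) < 3*b)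
  have hfinal : (3/8)*b*eps^2 + eps^2 ≤ (1/17472)*(NN+Q) :=
    st5_eg_eps b eps NN Q hb heps0 heps1 hB21
  have main : Wst/(40*b) ≤ (3/8)*NN + (1/2)*Q - 5*(SS/b^4) - (3/8)*b*eps^2 := by
    linarith [wdiv, s6, hfinal]
  linarith [hF1, main]

lemma st5_wrap (b W0 Wst : ℝ) (hb : 13 ≤ b) (hW0 : 0 ≤ W0) (hWst : 0 ≤ Wst)
    (h : Wst + Wst/(40*b) ≤ W0) : Wst ≤ Real.exp (-(1/(81*b))) * W0 := by
  have hb0 : (0:ℝ) < b := by linarith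
  have h1 : (40*b)*(Wst + Wst/(40*b)) ≤ (40*b)*W0 :=
    mul_le_mul_of_nonneg_left h (by linarith)
  have e : (40*b)*(Wst + Wst/(40*b)) = 40*b*Wst + Wst := by field_simp
  rw [e] at h1
  have h2 : 0 ≤ 40*b*W0 - (40*b+1)*Wst := by linarith
  have h3 : 81*b*Wst ≤ (81*b-1)*W0 := by
    nlinarith [mul_nonneg (show (0:ℝ) ≤ 81*b - 1 by linarith) h2, hWst, hb0]
  have hexp : 1 - 1/(81*b) ≤ Real.exp (-(1/(81*b))) := by
    have := Real.add_one_le_exp (-(1/(81*b)))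
    linarith
  have h4 : Wst ≤ (1 - 1/(81*b)) * W0 := by
    have e2 : (1 - 1/(81*b)) * W0 = ((81*b-1)*W0)/(81*b) := by field_simp
    rw [e2, le_div_iff₀ (by linarith : (0:ℝ) < 81*b)]
    linarith [h3]
  calc Wst ≤ (1 - 1/(81*b)) * W0 := h4
    _ ≤ Real.exp (-(1/(81*b))) * W0 := mul_le_mul_of_nonneg_right hexp hW0

set_option maxHeartbeats 2000000 in
/-- equation (16) of the paper: for every `ε ∈ (0, 1/32)`, every process on
`I_ε` with initial total mass `1`, and every step `t ≥ 1`,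
`W_{t+B_ε} ≤ max(e^{-1/(81 B_ε)} W_t, 64 ε B_ε³)`. -/
theorem stmt5 :
    ∀ ε : ℝ, ε ∈ Set.Ioo (0 : ℝ) (1 / 32) →
      ∀ P : MProcess ε, (∑ i ∈ Iset ε, P.p 1 i) = 1 →
        ∀ t : ℕ, 1 ≤ t →
          Wfun ε P (t + (Bval ε).toNat) ≤
            max (Real.exp (-(1 / (81 * (Bval ε : ℝ)))) * Wfun ε P t)
              (64 * ε * (Bval ε : ℝ) ^ 3) := by

  intro ε hε P hm t ht
  have hB := st5_B13 hε
  have hBo := st5_B_odd ε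
  have hbr : (13:ℝ) ≤ (Bval ε : ℝ) := by exact_mod_cast hB
  set n := (Bval ε).toNat with hn
  have hnb : ((n:ℕ):ℝ) = (Bval ε : ℝ) := by
    have : ((n:ℕ):ℤ) = Bval ε := Int.toNat_of_nonneg (by omega)
    exact_mod_cast this
  have hn1 : 1 ≤ n := by omega
  by_cases hcase : Wfun ε P (t+n) ≤ 64*ε*(Bval ε : ℝ)^3
  · exact le_trans hcase (le_max_right _ _)
  · push_neg at hcase
    refine le_trans ?_ (le_max_left _ _)
    set b : ℝ := (Bval ε : ℝ) with hbdef
    set Q : ℝ := ∑ k ∈ Finset.range n, P.q (t+k) 1 with hQdef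
    set NN : ℝ := ∑ k ∈ Finset.range n, Nn P (t+k) with hNNdef
    set SS : ℝ := ∑ k ∈ Finset.range n, Sq P (t+k) with hSSdef
    have hQ0 : 0 ≤ Q := Finset.sum_nonneg fun k _ => P.q_nonneg (t+k) 1
    have hNN0 : 0 ≤ NN := Finset.sum_nonneg fun k _ => st5_Nn_nonneg P (t+k)
    have hSS0 : 0 ≤ SS := Finset.sum_nonneg fun k _ => st5_Sq_nonneg P (t+k)
    have hSt0 : 0 ≤ Sq P t := st5_Sq_nonneg P t
    have hSst0 : 0 ≤ Sq P (t+n) := st5_Sq_nonneg P (t+n)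
    have hb0 : (0:ℝ) < b := by linarith
    have hb4p : (0:ℝ) < b^4 := by positivity
    have hW00 : 0 ≤ Wfun ε P t := by
      rw [st5_W_eq]
      have := st5_Nn_nonneg P t
      linarith
    have hWst0 : 0 ≤ Wfun ε P (t+n) := by
      rw [st5_W_eq]
      have := st5_Nn_nonneg P (t+n)
      linarith
    have hF1 : Wfun ε P (t+n) ≤ Wfun ε P t - (3/8)*NN - (1/2)*Q
        + 5*(SS/b^4) + (3/8)*b*ε^2 := by
      have h := st5_W_tele hε P hm ht n
      rw [hnb] at h
      have e1 : 5*((1/b^4) * SS) = 5*(SS/b^4) := by ring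
      have e2 : b*((3/8)*ε^2) = (3/8)*b*ε^2 := by ring
      linarith
    have hF2 : b*(Sq P t) - b*Q ≤ SS := by
      have h := st5_SS_low hε P ht n
      rw [hnb] at h
      nlinarith [h]
    have hF2b : Sq P t ≤ Q + Sq P (t+n) := by
      have h := st5_S_low hε P ht n
      linarith
    have hF3 : Sq P (t+n) ≤ b*(Sq P t) - (7/4)*SS + Q + (1/8)*NN + SS/b^4 := by
      have h1 : Sq P (t+n) ≤ Psi P (t+n) := st5_S_le_Psi P (t+n)
      have h2 := st5_Psi_tele hε P ht n
      have h3 : Psi P t ≤ b * Sq P t := st5_Psi_le_BS P t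
      have h4 := st5_U_le hε P ht n
      have e1 : (1/b^4) * SS = SS/b^4 := by ring
      linarith
    have hF4 : Wfun ε P (t+n) ≤ (1/2)*NN + (1/2)*Q + 4*(SS/b^4)
        + (3/8)*ε^2 + Sq P (t+n) := by
      have hlast : t + n = (t + (n-1)) + 1 := by omega
      have ht' : 1 ≤ t + (n-1) := by omega
      have hNstep := st5_N_step hε P hm ht'
      rw [← hlast] at hNstep
      have hmem : n - 1 ∈ Finset.range n := Finset.mem_range.mpr (by omega)
      have hNle : Nn P (t+(n-1)) ≤ NN :=
        Finset.single_le_sum (f := fun k => Nn P (t+k))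
          (fun k _ => st5_Nn_nonneg P (t+k)) hmem
      have hqle : P.q (t+(n-1)) 1 ≤ Q :=
        Finset.single_le_sum (f := fun k => P.q (t+k) 1)
          (fun k _ => P.q_nonneg (t+k) 1) hmem
      have hSqle : Sq P (t+(n-1)) ≤ SS :=
        Finset.single_le_sum (f := fun k => Sq P (t+k))
          (fun k _ => st5_Sq_nonneg P (t+k)) hmem
      have h4 : (1/b^4) * Sq P (t+(n-1)) ≤ (1/b^4) * SS :=
        mul_le_mul_of_nonneg_left hSqle (by positivity)
      have e1 : (1/b^4) * SS = SS/b^4 := by ring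
      rw [st5_W_eq]
      linarith
    have hend := st5_endgame b (Wfun ε P t) (Wfun ε P (t+n)) Q NN SS
      (Sq P t) (Sq P (t+n)) ε hbr hε.1 hε.2 hQ0 hNN0 hSS0 hSt0 hSst0
      hF1 hF2 hF2b hF3 hF4 hcase
    exact st5_wrap b (Wfun ε P t) (Wfun ε P (t+n)) hbr hW00 hWst0 hend
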